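/- Let X be a finite set of cardinality N, let 0 ≤ k < N, and let E be an exponential family on X of dimension k (i.e. with extended tangent space T of dimension k+1). If sup_P inf_{Q∈E} D(P‖Q) = log N − log(k+1), then k+1 divides N and there exists a partition of X into exactly k+1 blocks, each of cardinality N/(k+1), such that E equals the set of all strictly positive probability distributions on X that are constant on each block of the partition. -/

import Mathlib

open scoped BigOperators Classical

noncomputable section

variable {X : Type*}

/-- A probability distribution on a finite set `X`. -/
def IsProb [Fintype X] (P : X → ℝ) : Prop :=
  (∀ x, 0 ≤ P x) ∧ ∑ x, P x = 1

/-- Information divergence `D(P‖Q)` with values in `EReal`, equal to `⊤` if the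
support of `P` is not contained in the support of `Q`.  (The convention
`0 · log 0 = 0` holds automatically since `Real.log 0 = 0`.) -/
def KL [Fintype X] (P Q : X → ℝ) : EReal :=
  if ∀ x, Q x = 0 → P x = 0 then ((∑ x, P x * Real.log (P x / Q x) : ℝ) : EReal) else ⊤

/-- The exponential family with strictly positive reference measure `ν` and extended
tangent space `T` (a subspace of `ℝ^X` containing the constants): the set of strictly
positive probability distributions `P` with `log (P/ν) ∈ T`. -/
def expFam [Fintype X] (ν : X → ℝ) (T : Submodule ℝ (X → ℝ)) : Set (X → ℝ) :=
  {P | (∀ x, 0 < P x) ∧ ∑ x, P x = 1 ∧ (fun x => Real.log (P x / ν x)) ∈ T}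

/-- `sup_P inf_{Q ∈ E} D(P‖Q)`, supremum over all probability distributions `P`. -/
def maxDiv [Fintype X] (E : Set (X → ℝ)) : EReal :=
  ⨆ P ∈ {P : X → ℝ | IsProb P}, ⨅ Q ∈ E, KL P Q

/-- The orthogonal complement of `T` in `ℝ^X` w.r.t. the standard inner product
(the normal space of the exponential family with extended tangent space `T`). -/
def orthSpace [Fintype X] (T : Submodule ℝ (X → ℝ)) : Set (X → ℝ) :=
  {u | ∀ t ∈ T, ∑ x, u x * t x = 0}

/-- A circuit vector of a set `N ⊆ ℝ^X`: a nonzero element whose support is minimal,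
i.e. every `u ∈ N` with `supp u ⊆ supp v` is a scalar multiple of `v`. -/
def IsCircuitVector (N : Set (X → ℝ)) (v : X → ℝ) : Prop :=
  v ∈ N ∧ v ≠ 0 ∧ ∀ u ∈ N, Function.support u ⊆ Function.support v → ∃ α : ℝ, u = α • v

/-- A circuit of `N`: the support of a circuit vector. -/
def IsCircuit (N : Set (X → ℝ)) (σ : Set X) : Prop :=
  ∃ v, IsCircuitVector N v ∧ σ = Function.support v

/-- The closed partition model of the partition given by the equivalence relation `r`:
all probability distributions constant on each block. -/
def partModel [Fintype X] (r : X → X → Prop) : Set (X → ℝ) :=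
  {Q | IsProb Q ∧ ∀ x y, r x y → Q x = Q y}

/-- The partition exponential family of the partition given by the equivalence
relation `r`: all strictly positive probability distributions constant on each block. -/
def partExpFam [Fintype X] (r : X → X → Prop) : Set (X → ℝ) :=
  {P | (∀ x, 0 < P x) ∧ ∑ x, P x = 1 ∧ ∀ x y, r x y → P x = P y}

/-- The set `X̲` of points not annihilated by all of `N`. -/
def underlineSet (N : Set (X → ℝ)) : Set X := {x | ∃ v ∈ N, v x ≠ 0}

/-- The relation `x ∼ y` : every `v ∈ N` with `v x ≠ 0` has `v y ≠ 0`. -/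
def coRel (N : Set (X → ℝ)) (x y : X) : Prop := ∀ v ∈ N, v x ≠ 0 → v y ≠ 0

/-- `Z` is an equivalence class of `∼` on `X̲`. -/
def IsClassOf (N : Set (X → ℝ)) (Z : Set X) : Prop :=
  ∃ x ∈ underlineSet N, Z = {y | coRel N x y}

end

set_option linter.unusedSectionVars false
set_option linter.deprecated false
open Finset
namespace Stmt12Aux

lemma one_div_log_helper (x : ℝ) : Real.log (1/x) = - Real.log x := by
  rw [one_div, Real.log_inv]

open Finset



/-- termwise Gibbs: `p - q ≤ p * log (p/q)`. -/
lemma term_ineq {p q : ℝ} (hp : 0 ≤ p) (hq : 0 < q) : p - q ≤ p * Real.log (p / q) := by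
  rcases eq_or_lt_of_le hp with h | h
  · simp [← h, hq.le]
  · have hx : 0 < q / p := by positivity
    have := Real.log_le_sub_one_of_pos hx
    have hlog : Real.log (q / p) = - Real.log (p / q) := by
      rw [← Real.log_inv]; congr 1; field_simp
    rw [hlog] at this
    have : 1 - q / p ≤ Real.log (p / q) := by linarith
    have h2 := mul_le_mul_of_nonneg_left this (le_of_lt h)
    calc p - q = p * (1 - q / p) := by field_simp
    _ ≤ p * Real.log (p / q) := h2

/-- strict version. -/
lemma term_ineq_strict {p q : ℝ} (hp : 0 < p) (hq : 0 < q) (hne : p ≠ q) :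
    p - q < p * Real.log (p / q) := by
  have hx : 0 < q / p := by positivity
  have hx1 : q / p ≠ 1 := by
    intro h; apply hne; field_simp at h; exact h.symm
  have := Real.log_lt_sub_one_of_pos hx hx1
  have hlog : Real.log (q / p) = - Real.log (p / q) := by
    rw [← Real.log_inv]; congr 1; field_simp
  rw [hlog] at this
  have h1 : 1 - q / p < Real.log (p / q) := by linarith
  have h2 := mul_lt_mul_of_pos_left h1 hp
  calc p - q = p * (1 - q / p) := by field_simp
  _ < p * Real.log (p / q) := h2

/-- Gibbs inequality over a finset. -/
lemma gibbs {ι : Type*} (s : Finset ι) (p q : ι → ℝ) (h0 : ∀ i ∈ s, 0 ≤ p i)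
    (hq : ∀ i ∈ s, 0 < q i) (hp1 : ∑ i ∈ s, p i = 1) (hq1 : ∑ i ∈ s, q i ≤ 1) :
    0 ≤ ∑ i ∈ s, p i * Real.log (p i / q i) := by
  have h := Finset.sum_le_sum (fun i hi => term_ineq (h0 i hi) (hq i hi))
  rw [Finset.sum_sub_distrib, hp1] at h
  linarith



lemma key_pair {X : Type*} [Fintype X] (ν : X → ℝ) (hν : ∀ x, 0 < ν x)
    (T : Submodule ℝ (X → ℝ)) (L : ℝ)
    (hmax : maxDiv (expFam ν T) = (L : EReal))
    (P P' : X → ℝ) (hP : IsProb P) (hP' : IsProb P')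
    (hmom : ∀ t ∈ T, ∑ x, P x * t x = ∑ x, P' x * t x) :
    ∑ x, P x * Real.log (P x / ν x) - ∑ x, P' x * Real.log (P' x / ν x) ≤ L := by
  set r : ℝ := ∑ x, P x * Real.log (P x / ν x) - ∑ x, P' x * Real.log (P' x / ν x) with hr
  have hQle : ∀ Q ∈ expFam ν T, (r : EReal) ≤ KL P Q := by
    intro Q hQ
    obtain ⟨hQpos, hQ1, hQT⟩ := hQ
    have hcond : ∀ x, Q x = 0 → P x = 0 := fun x h => absurd h (ne_of_gt (hQpos x))
    rw [KL, if_pos hcond, EReal.coe_le_coe_iff]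
    set g : X → ℝ := fun x => Real.log (Q x / ν x) with hg
    have hsplit : ∀ R : X → ℝ, (∀ x, 0 ≤ R x) → ∑ x, R x * Real.log (R x / Q x)
        = ∑ x, R x * Real.log (R x / ν x) - ∑ x, R x * g x := by
      intro R hR
      rw [← Finset.sum_sub_distrib]
      apply Finset.sum_congr rfl
      intro x _
      rcases eq_or_lt_of_le (hR x) with h | h
      · simp [← h]
      · have h1 : R x ≠ 0 := ne_of_gt h
        rw [hg]
        simp only []
        rw [Real.log_div h1 (ne_of_gt (hQpos x)), Real.log_div h1 (ne_of_gt (hν x)),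
            Real.log_div (ne_of_gt (hQpos x)) (ne_of_gt (hν x))]
        ring
    have hgibbs : 0 ≤ ∑ x, P' x * Real.log (P' x / Q x) :=
      gibbs Finset.univ P' Q (fun x _ => hP'.1 x) (fun x _ => hQpos x) hP'.2 (le_of_eq hQ1)
    have e1 := hsplit P hP.1
    have e2 := hsplit P' hP'.1
    have hgT : ∑ x, P x * g x = ∑ x, P' x * g x := hmom g hQT
    rw [e1, hgT]
    linarith
  have h1 : (r : EReal) ≤ ⨅ Q ∈ expFam ν T, KL P Q := le_iInf₂ hQle
  have h2 : (⨅ Q ∈ expFam ν T, KL P Q) ≤ maxDiv (expFam ν T) := by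
    rw [maxDiv]
    exact le_iSup₂ (f := fun (P : X → ℝ) (_ : P ∈ {P : X → ℝ | IsProb P}) =>
      ⨅ Q ∈ expFam ν T, KL P Q) P hP
  rw [hmax] at h2
  exact EReal.coe_le_coe_iff.mp (le_trans h1 h2)


section Quot
variable {κ : Type*} [Fintype κ] [DecidableEq κ]




lemma sum_supp (V : κ → ℝ) (f : κ → ℝ) :
    ∑ i ∈ univ.filter (fun i => V i ≠ 0), V i * f i = ∑ i, V i * f i := by
  rw [Finset.sum_filter_of_ne]
  intro i _ h hv
  rw [hv] at h; simp at h

lemma entropy_ge (M : ℕ) (hM : 1 ≤ M) (V : κ → ℝ) (h0 : ∀ i, 0 ≤ V i) (h1 : ∑ i, V i = 1)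
    (hcard : (univ.filter (fun i => V i ≠ 0)).card ≤ M) :
    -Real.log M ≤ ∑ i, V i * Real.log (V i) := by
  classical
  set s := univ.filter (fun i => V i ≠ 0) with hs
  have hMr : (0:ℝ) < M := by exact_mod_cast hM
  have hsum1 : ∑ i ∈ s, V i = 1 := by
    have := sum_supp V (fun _ => 1)
    simpa using this.trans (by simpa using h1)
  have hG : ∀ i ∈ s, V i - 1/M ≤ V i * Real.log (V i / (1/M)) := by
    intro i hi
    exact term_ineq (h0 i) (by positivity)
  have hGe := Finset.sum_le_sum hG
  rw [Finset.sum_sub_distrib, hsum1] at hGe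
  have hcardr : (s.card : ℝ) ≤ M := by exact_mod_cast hcard
  have h2 : ∑ i ∈ s, (1:ℝ)/M = s.card / M := by
    rw [Finset.sum_const, nsmul_eq_mul, mul_one_div]
  rw [h2] at hGe
  have h3 : (0:ℝ) ≤ ∑ i ∈ s, V i * Real.log (V i / (1/M)) := by
    have : (s.card : ℝ)/M ≤ 1 := by rw [div_le_one hMr]; exact hcardr
    linarith
  have h4 : ∑ i ∈ s, V i * Real.log (V i / (1/M)) =
      (∑ i ∈ s, V i * Real.log (V i)) + Real.log M := by
    have : ∀ i ∈ s, V i * Real.log (V i / (1/M)) = V i * Real.log (V i) + V i * Real.log M := by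
      intro i hi
      have hVi : V i ≠ 0 := by simpa [hs] using hi
      have hVip : 0 < V i := lt_of_le_of_ne (h0 i) (Ne.symm hVi)
      rw [Real.log_div hVi (by positivity), one_div_log_helper]
      ring
    rw [Finset.sum_congr rfl this, Finset.sum_add_distrib, ← Finset.sum_mul, hsum1]
    ring
  rw [h4] at h3
  have h5 : ∑ i ∈ s, V i * Real.log (V i) = ∑ i, V i * Real.log (V i) := sum_supp V _
  linarith [h5 ▸ h3]

lemma entropy_eq (M : ℕ) (hM : 1 ≤ M) (V : κ → ℝ) (h0 : ∀ i, 0 ≤ V i) (h1 : ∑ i, V i = 1)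
    (hcard : (univ.filter (fun i => V i ≠ 0)).card ≤ M)
    (heq : ∑ i, V i * Real.log (V i) = -Real.log M) :
    (∀ i, V i = 0 ∨ V i = 1/M) ∧ (univ.filter (fun i => V i ≠ 0)).card = M := by
  classical
  set s := univ.filter (fun i => V i ≠ 0) with hs
  have hMr : (0:ℝ) < M := by exact_mod_cast hM
  have hsum1 : ∑ i ∈ s, V i = 1 := by
    have := sum_supp V (fun _ => 1)
    simpa using this.trans (by simpa using h1)
  -- G = 0
  have h4 : ∑ i ∈ s, V i * Real.log (V i / (1/M)) =
      (∑ i ∈ s, V i * Real.log (V i)) + Real.log M := by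
    have : ∀ i ∈ s, V i * Real.log (V i / (1/M)) = V i * Real.log (V i) + V i * Real.log M := by
      intro i hi
      have hVi : V i ≠ 0 := by simpa [hs] using hi
      rw [Real.log_div hVi (by positivity), one_div_log_helper]
      ring
    rw [Finset.sum_congr rfl this, Finset.sum_add_distrib, ← Finset.sum_mul, hsum1]
    ring
  have h5 : ∑ i ∈ s, V i * Real.log (V i) = ∑ i, V i * Real.log (V i) := sum_supp V _
  have hG0 : ∑ i ∈ s, V i * Real.log (V i / (1/M)) = 0 := by
    rw [h4, h5, heq]; ring
  -- termwise
  have hterm : ∀ i ∈ s, 0 ≤ V i * Real.log (V i / (1/M)) - (V i - 1/M) := by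
    intro i hi
    have := term_ineq (h0 i) (show (0:ℝ) < 1/M by positivity) (p := V i)
    linarith
  have hsumterm : ∑ i ∈ s, (V i * Real.log (V i / (1/M)) - (V i - 1/M)) =
      (s.card : ℝ)/M - 1 := by
    rw [Finset.sum_sub_distrib, hG0, Finset.sum_sub_distrib, hsum1, Finset.sum_const, nsmul_eq_mul, mul_one_div]
    ring
  have hcardr : (s.card : ℝ) ≤ M := by exact_mod_cast hcard
  have hle : (s.card : ℝ)/M - 1 ≤ 0 := by
    have : (s.card : ℝ)/M ≤ 1 := by rw [div_le_one hMr]; exact hcardr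
    linarith
  have hge : 0 ≤ ∑ i ∈ s, (V i * Real.log (V i / (1/M)) - (V i - 1/M)) :=
    Finset.sum_nonneg hterm
  have hzero : ∑ i ∈ s, (V i * Real.log (V i / (1/M)) - (V i - 1/M)) = 0 := le_antisymm (by rw [hsumterm]; exact hle) hge
  have hcardM : (s.card : ℝ) = M := by
    rw [hzero] at hsumterm
    field_simp at hsumterm
    linarith
  have hall := (Finset.sum_eq_zero_iff_of_nonneg hterm).1 hzero
  constructor
  · intro i
    by_cases hVi : V i = 0
    · left; exact hVi
    · right
      have hi : i ∈ s := by simp [hs, hVi]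
      have hVip : 0 < V i := lt_of_le_of_ne (h0 i) (Ne.symm hVi)
      by_contra hne
      have := term_ineq_strict hVip (show (0:ℝ) < 1/M by positivity) (by simpa using hne)
      have h := hall i hi
      linarith
  · exact_mod_cast hcardM




/-- extension by zero as a linear map -/
noncomputable def extZero (S : Finset κ) : ((↥S : Type _) → ℝ) →ₗ[ℝ] (κ → ℝ) where
  toFun u := fun i => if h : i ∈ S then u ⟨i, h⟩ else 0
  map_add' u v := by funext i; by_cases h : i ∈ S <;> simp [h]
  map_smul' c u := by funext i; by_cases h : i ∈ S <;> simp [h]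

/-- pairing bilinear map -/
noncomputable def pairing : (κ → ℝ) →ₗ[ℝ] (κ → ℝ) →ₗ[ℝ] ℝ :=
  LinearMap.mk₂ ℝ (fun u t => ∑ i, u i * t i)
    (fun u v t => by simp [add_mul, Finset.sum_add_distrib])
    (fun c u t => by simp [Finset.mul_sum, mul_assoc])
    (fun u v t => by simp [mul_add, Finset.sum_add_distrib])
    (fun c u t => by simp [Finset.mul_sum]; apply Finset.sum_congr rfl; intros; ring)

noncomputable def evalW (W : Submodule ℝ (κ → ℝ)) : (κ → ℝ) →ₗ[ℝ] Module.Dual ℝ ↥W where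
  toFun u := (pairing u).comp W.subtype
  map_add' u v := by ext t; simp
  map_smul' c u := by ext t; simp

lemma exists_dependence (k : ℕ) (W : Submodule ℝ (κ → ℝ))
    (hdimW : Module.finrank ℝ W = k + 1) (S : Finset κ) (hS : k + 2 ≤ S.card) :
    ∃ u : κ → ℝ, u ≠ 0 ∧ (∀ i, i ∉ S → u i = 0) ∧ ∀ t ∈ W, ∑ i, u i * t i = 0 := by
  classical
  set f := (evalW W).comp (extZero S) with hf
  have hnotinj : ¬ Function.Injective f := by
    intro hinj
    have h1 := LinearMap.finrank_le_finrank_of_injective hinj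
    rw [Module.finrank_fintype_fun_eq_card] at h1
    rw [Subspace.dual_finrank_eq, hdimW, Fintype.card_coe] at h1
    omega
  rw [Function.not_injective_iff] at hnotinj
  obtain ⟨a, b, hab, hne⟩ := hnotinj
  refine ⟨extZero S (a - b), ?_, ?_, ?_⟩
  · intro h
    apply hne
    have : ∀ x : ↥S, (a - b) x = 0 := by
      intro x
      have := congrFun h x.1
      simpa [extZero, x.2] using this
    have : a - b = 0 := funext this
    exact sub_eq_zero.mp this
  · intro i hi; simp [extZero, hi]
  · intro t ht
    have : f (a - b) = 0 := by rw [map_sub, sub_eq_zero]; exact hab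
    have h2 := congrFun (congrArg (fun (g : Module.Dual ℝ ↥W) => g.toFun) this) ⟨t, ht⟩
    simpa [hf, evalW, pairing, extZero] using h2




/-- the fiber polytope of `lam0` -/
def FibQ (W : Submodule ℝ (κ → ℝ)) (lam0 : κ → ℝ) : Set (κ → ℝ) :=
  {V | (∀ i, 0 ≤ V i) ∧ ∑ i, V i = 1 ∧ ∀ t ∈ W, ∑ i, V i * t i = ∑ i, lam0 i * t i}

/-- basic (= extreme) points of the fiber -/
def IsBasicPt (W : Submodule ℝ (κ → ℝ)) (lam0 : κ → ℝ) (V : κ → ℝ) : Prop :=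
  V ∈ FibQ W lam0 ∧
    ∀ u : κ → ℝ, (∀ i, V i = 0 → u i = 0) → (∀ t ∈ W, ∑ i, u i * t i = 0) → u = 0

/-- a representation of `lam` as a convex combination of basic points with small support -/
def IsRep (W : Submodule ℝ (κ → ℝ)) (lam0 lam : κ → ℝ)
    (s : Finset (κ → ℝ)) (w : (κ → ℝ) → ℝ) : Prop :=
  (∀ V ∈ s, 0 ≤ w V ∧ IsBasicPt W lam0 V ∧ (∀ i, lam i = 0 → V i = 0)) ∧
    (∑ V ∈ s, w V = 1) ∧ ∀ i, (∑ V ∈ s, w V * V i) = lam i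

lemma merge_sum (s1 s2 : Finset (κ → ℝ)) (w1 w2 : (κ → ℝ) → ℝ) (c1 c2 : ℝ)
    (f : (κ → ℝ) → ℝ) :
    ∑ V ∈ s1 ∪ s2, (c1 * (if V ∈ s1 then w1 V else 0) + c2 * (if V ∈ s2 then w2 V else 0)) * f V
      = c1 * ∑ V ∈ s1, w1 V * f V + c2 * ∑ V ∈ s2, w2 V * f V := by
  have h1 : ∀ (s t : Finset (κ → ℝ)) (w : (κ → ℝ) → ℝ) (c : ℝ), t ⊆ s →
      ∑ V ∈ s, (c * (if V ∈ t then w V else 0)) * f V = c * ∑ V ∈ t, w V * f V := by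
    intro s t w c hts
    rw [Finset.mul_sum]
    rw [← Finset.sum_subset hts (by intro x _ hx; simp [hx])]
    apply Finset.sum_congr rfl
    intro x hx
    simp [hx]; ring
  have := Finset.sum_add_distrib (s := s1 ∪ s2)
    (f := fun V => (c1 * (if V ∈ s1 then w1 V else 0)) * f V)
    (g := fun V => (c2 * (if V ∈ s2 then w2 V else 0)) * f V)
  rw [← h1 (s1 ∪ s2) s1 w1 c1 Finset.subset_union_left,
      ← h1 (s1 ∪ s2) s2 w2 c2 Finset.subset_union_right]
  rw [← this]
  apply Finset.sum_congr rfl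
  intros; ring

/-- merged weight function -/
noncomputable def mergeFun (s1 s2 : Finset (κ → ℝ)) (w1 w2 : (κ → ℝ) → ℝ) (c1 c2 : ℝ) : (κ → ℝ) → ℝ :=
  fun V => c1 * (if V ∈ s1 then w1 V else 0) + c2 * (if V ∈ s2 then w2 V else 0)

lemma rep_merge (W : Submodule ℝ (κ → ℝ)) (lam0 lam lam1 lam2 : κ → ℝ) (c1 c2 : ℝ)
    (hc1 : 0 ≤ c1) (hc2 : 0 ≤ c2) (hc : c1 + c2 = 1)
    (hlam : ∀ i, lam i = c1 * lam1 i + c2 * lam2 i)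
    (hz1 : ∀ i, lam i = 0 → lam1 i = 0) (hz2 : ∀ i, lam i = 0 → lam2 i = 0)
    {s1 s2 w1 w2} (h1 : IsRep W lam0 lam1 s1 w1) (h2 : IsRep W lam0 lam2 s2 w2) :
    IsRep W lam0 lam (s1 ∪ s2) (mergeFun s1 s2 w1 w2 c1 c2) := by
  classical
  rw [IsRep]
  unfold mergeFun
  refine ⟨?_, ?_, ?_⟩
  · intro V hV
    refine ⟨?_, ?_, ?_⟩
    · have : ∀ (s : Finset (κ → ℝ)) (w : (κ → ℝ) → ℝ) (c : ℝ),
          (∀ V' ∈ s, 0 ≤ w V') → 0 ≤ c → 0 ≤ c * (if V ∈ s then w V else 0) := by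
        intro s w c hw hcpos
        by_cases h : V ∈ s
        · simp [h]; exact mul_nonneg hcpos (hw V h)
        · simp [h]
      exact add_nonneg (this s1 w1 c1 (fun V' h => (h1.1 V' h).1) hc1)
        (this s2 w2 c2 (fun V' h => (h2.1 V' h).1) hc2)
    · rcases Finset.mem_union.mp hV with h | h
      · exact (h1.1 V h).2.1
      · exact (h2.1 V h).2.1
    · intro i hi
      rcases Finset.mem_union.mp hV with h | h
      · exact (h1.1 V h).2.2 i (hz1 i hi)
      · exact (h2.1 V h).2.2 i (hz2 i hi)
  · have := merge_sum s1 s2 w1 w2 c1 c2 (fun _ => 1)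
    simpa [h1.2.1, h2.2.1, hc] using this
  · intro i
    have := merge_sum s1 s2 w1 w2 c1 c2 (fun V => V i)
    rw [this, h1.2.2 i, h2.2.2 i, hlam i]

lemma pos_neg_parts {u : κ → ℝ} (hu : u ≠ 0) (hsum : ∑ i, u i = 0) :
    (∃ i, 0 < u i) ∧ (∃ i, u i < 0) := by
  have hex : ∃ i, u i ≠ 0 := by
    by_contra h; push_neg at h; exact hu (funext h)
  obtain ⟨j, hj⟩ := hex
  constructor
  · by_contra h
    push_neg at h
    have h2 : ∑ i, -u i = 0 := by rw [Finset.sum_neg_distrib, hsum, neg_zero]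
    have := (Finset.sum_eq_zero_iff_of_nonneg
      (fun i _ => neg_nonneg.mpr (h i))).1 h2 j (Finset.mem_univ j)
    apply hj; linarith
  · by_contra h
    push_neg at h
    have := (Finset.sum_eq_zero_iff_of_nonneg (fun i _ => h i)).1 hsum j (Finset.mem_univ j)
    exact hj this

lemma rep_exists (W : Submodule ℝ (κ → ℝ)) (h1W : (fun _ => (1:ℝ)) ∈ W) (lam0 : κ → ℝ) :
    ∀ lam ∈ FibQ W lam0, ∃ s w, IsRep W lam0 lam s w := by
  classical
  suffices h : ∀ (c : ℕ) (lam : κ → ℝ), lam ∈ FibQ W lam0 →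
      (univ.filter (fun i => lam i ≠ 0)).card ≤ c → ∃ s w, IsRep W lam0 lam s w by
    intro lam hlam
    exact h (univ.filter (fun i => lam i ≠ 0)).card lam hlam le_rfl
  intro c
  induction c with
  | zero =>
    intro lam hlam hcard
    exfalso
    have : ∀ i, lam i = 0 := by
      intro i
      by_contra h
      have : i ∈ univ.filter (fun i => lam i ≠ 0) := by simp [h]
      have := Finset.card_pos.mpr ⟨i, this⟩
      omega
    have h1 := hlam.2.1
    rw [Finset.sum_congr rfl (fun i _ => this i)] at h1
    simp at h1
  | succ c ih =>
    intro lam hlam hcard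
    by_cases hbasic : IsBasicPt W lam0 lam
    · refine ⟨{lam}, fun _ => 1, ?_, by simp, by simp⟩
      intro V hV
      simp at hV
      subst hV
      exact ⟨zero_le_one, hbasic, fun i h => h⟩
    · have hex : ∃ u : κ → ℝ, (∀ i, lam i = 0 → u i = 0) ∧
          (∀ t ∈ W, ∑ i, u i * t i = 0) ∧ u ≠ 0 := by
        rw [IsBasicPt] at hbasic
        push_neg at hbasic
        obtain ⟨u, h1, h2, h3⟩ := hbasic hlam
        exact ⟨u, h1, h2, h3⟩
      obtain ⟨u, hsupp, hmom, hune⟩ := hex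
      have husum : ∑ i, u i = 0 := by simpa using hmom _ h1W
      obtain ⟨⟨ip, hip⟩, ⟨iq, hiq⟩⟩ := pos_neg_parts hune husum
      -- positive side
      have hposne : (univ.filter (fun i => 0 < u i)).Nonempty := ⟨ip, by simp [hip]⟩
      obtain ⟨i1, hi1mem, hi1min⟩ := Finset.exists_min_image _ (fun i => lam i / u i) hposne
      have hi1pos : 0 < u i1 := by simpa using hi1mem
      have hlami1 : 0 < lam i1 := by
        rcases eq_or_lt_of_le (hlam.1 i1) with h | h
        · exfalso; exact (ne_of_gt hi1pos) (hsupp i1 h.symm)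
        · exact h
      set t1 := lam i1 / u i1 with ht1
      have ht1pos : 0 < t1 := div_pos hlami1 hi1pos
      -- negative side
      have hnegne : (univ.filter (fun i => u i < 0)).Nonempty := ⟨iq, by simp [hiq]⟩
      obtain ⟨i2, hi2mem, hi2min⟩ := Finset.exists_min_image _ (fun i => lam i / (-u i)) hnegne
      have hi2neg : u i2 < 0 := by simpa using hi2mem
      have hlami2 : 0 < lam i2 := by
        rcases eq_or_lt_of_le (hlam.1 i2) with h | h
        · exfalso; exact (ne_of_lt hi2neg) (hsupp i2 h.symm)
        · exact h
      set t2 := lam i2 / (-u i2) with ht2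
      have ht2pos : 0 < t2 := div_pos hlami2 (by linarith)
      set lam1 : κ → ℝ := fun i => lam i - t1 * u i with hlam1
      set lam2 : κ → ℝ := fun i => lam i + t2 * u i with hlam2
      -- lam1 properties
      have hlam1nn : ∀ i, 0 ≤ lam1 i := by
        intro i
        rw [hlam1]
        by_cases h : 0 < u i
        · have := hi1min i (by simp [h])
          have h2 : t1 * u i ≤ lam i := by
            rw [ht1]
            rw [div_le_div_iff₀ hi1pos h] at this
            calc lam i1 / u i1 * u i ≤ (lam i * u i1 / u i1) := by
                  rw [div_mul_eq_mul_div, div_le_div_iff₀ hi1pos hi1pos]; nlinarith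
            _ = lam i := by field_simp
          simp only []; linarith
        · push_neg at h
          have : t1 * u i ≤ 0 := mul_nonpos_of_nonneg_of_nonpos ht1pos.le h
          have := hlam.1 i
          simp only []; linarith
      have hlam2nn : ∀ i, 0 ≤ lam2 i := by
        intro i
        rw [hlam2]
        by_cases h : u i < 0
        · have := hi2min i (by simp [h])
          have h2 : -(t2 * u i) ≤ lam i := by
            rw [ht2]
            rw [div_le_div_iff₀ (by linarith : (0:ℝ) < -u i2) (by linarith : (0:ℝ) < -u i)] at this
            have : lam i2 / (-u i2) * (-u i) ≤ lam i := by
              rw [div_mul_eq_mul_div, div_le_iff₀ (by linarith : (0:ℝ) < -u i2)]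
              nlinarith
            calc -(t2 * u i) = lam i2 / (-u i2) * (-u i) := by rw [ht2]; ring
            _ ≤ lam i := this
          simp only []; linarith
        · push_neg at h
          have : 0 ≤ t2 * u i := mul_nonneg ht2pos.le h
          have := hlam.1 i
          simp only []; linarith
      have hlam1fib : lam1 ∈ FibQ W lam0 := by
        refine ⟨hlam1nn, ?_, ?_⟩
        · have : ∑ i, lam1 i = ∑ i, lam i - t1 * ∑ i, u i := by
            rw [Finset.mul_sum, ← Finset.sum_sub_distrib]
          rw [this, husum, hlam.2.1]; ring
        · intro t ht
          have : ∑ i, lam1 i * t i = ∑ i, lam i * t i - t1 * ∑ i, u i * t i := by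
            rw [Finset.mul_sum, ← Finset.sum_sub_distrib]
            apply Finset.sum_congr rfl; intros; simp only [hlam1]; ring
          rw [this, hmom t ht, hlam.2.2 t ht]; ring
      have hlam2fib : lam2 ∈ FibQ W lam0 := by
        refine ⟨hlam2nn, ?_, ?_⟩
        · have : ∑ i, lam2 i = ∑ i, lam i + t2 * ∑ i, u i := by
            rw [Finset.mul_sum, ← Finset.sum_add_distrib]
          rw [this, husum, hlam.2.1]; ring
        · intro t ht
          have : ∑ i, lam2 i * t i = ∑ i, lam i * t i + t2 * ∑ i, u i * t i := by
            rw [Finset.mul_sum, ← Finset.sum_add_distrib]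
            apply Finset.sum_congr rfl; intros; simp only [hlam2]; ring
          rw [this, hmom t ht, hlam.2.2 t ht]; ring
      -- support decrease
      have hsupp1 : ∀ i, lam i = 0 → lam1 i = 0 := by
        intro i h; simp only [hlam1, h, hsupp i h]; ring
      have hsupp2 : ∀ i, lam i = 0 → lam2 i = 0 := by
        intro i h; simp only [hlam2, h, hsupp i h]; ring
      have hcard1 : (univ.filter (fun i => lam1 i ≠ 0)).card ≤ c := by
        have hsub : univ.filter (fun i => lam1 i ≠ 0) ⊆
            (univ.filter (fun i => lam i ≠ 0)).erase i1 := by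
          intro i hi
          simp only [Finset.mem_filter, Finset.mem_univ, true_and] at hi
          rw [Finset.mem_erase]
          constructor
          · intro h
            apply hi
            subst h
            simp only [hlam1, ht1]
            field_simp
            ring
          · simp only [Finset.mem_filter, Finset.mem_univ, true_and]
            intro h
            exact hi (hsupp1 i h)
        calc (univ.filter (fun i => lam1 i ≠ 0)).card
            ≤ ((univ.filter (fun i => lam i ≠ 0)).erase i1).card := Finset.card_le_card hsub
          _ ≤ (univ.filter (fun i => lam i ≠ 0)).card - 1 := by
              rw [Finset.card_erase_of_mem (by simp [ne_of_gt hlami1])]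
          _ ≤ c := by
              have : 1 ≤ (univ.filter (fun i => lam i ≠ 0)).card :=
                Finset.card_pos.mpr ⟨i1, by simp [ne_of_gt hlami1]⟩
              omega
      have hcard2 : (univ.filter (fun i => lam2 i ≠ 0)).card ≤ c := by
        have hsub : univ.filter (fun i => lam2 i ≠ 0) ⊆
            (univ.filter (fun i => lam i ≠ 0)).erase i2 := by
          intro i hi
          simp only [Finset.mem_filter, Finset.mem_univ, true_and] at hi
          rw [Finset.mem_erase]
          constructor
          · intro h
            apply hi
            subst h
            have hne : u i ≠ 0 := ne_of_lt hi2neg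
            simp only [hlam2, ht2]
            field_simp
            ring
          · simp only [Finset.mem_filter, Finset.mem_univ, true_and]
            intro h
            exact hi (hsupp2 i h)
        calc (univ.filter (fun i => lam2 i ≠ 0)).card
            ≤ ((univ.filter (fun i => lam i ≠ 0)).erase i2).card := Finset.card_le_card hsub
          _ ≤ (univ.filter (fun i => lam i ≠ 0)).card - 1 := by
              rw [Finset.card_erase_of_mem (by simp [ne_of_gt hlami2])]
          _ ≤ c := by
              have : 1 ≤ (univ.filter (fun i => lam i ≠ 0)).card :=
                Finset.card_pos.mpr ⟨i2, by simp [ne_of_gt hlami2]⟩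
              omega
      obtain ⟨s1, w1, hrep1⟩ := ih lam1 hlam1fib hcard1
      obtain ⟨s2, w2, hrep2⟩ := ih lam2 hlam2fib hcard2
      exact ⟨_, _, rep_merge W lam0 lam lam1 lam2 (t2/(t1+t2)) (t1/(t1+t2))
        (by positivity) (by positivity)
        (by field_simp; ring)
        (by
          intro i
          simp only [hlam1, hlam2]
          field_simp
          ring)
        hsupp1 hsupp2 hrep1 hrep2⟩



noncomputable def lamQ (N : ℕ) (n : κ → ℕ) : κ → ℝ := fun i => (n i : ℝ) / N

noncomputable def DQ (V mu : κ → ℝ) : ℝ := ∑ i, V i * Real.log (V i / mu i)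

noncomputable def SQ (V : κ → ℝ) : ℝ := ∑ i, V i * Real.log (V i)

lemma D_split (V mu : κ → ℝ) (h0 : ∀ i, 0 ≤ V i) (hmu : ∀ i, 0 < mu i) :
    DQ V mu = SQ V - ∑ i, V i * Real.log (mu i) := by
  rw [DQ, SQ, ← Finset.sum_sub_distrib]
  apply Finset.sum_congr rfl
  intro i _
  rcases eq_or_lt_of_le (h0 i) with h | h
  · simp [← h]
  · rw [Real.log_div (ne_of_gt h) (ne_of_gt (hmu i))]; ring

lemma mainQ [Nonempty κ]
    (k N : ℕ) (hNpos : 0 < N)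
    (W : Submodule ℝ (κ → ℝ)) (h1W : (fun _ => (1:ℝ)) ∈ W)
    (hdimW : Module.finrank ℝ W = k + 1)
    (hsep : ∀ i j : κ, (∀ t ∈ W, t i = t j) → i = j)
    (n : κ → ℕ) (hn : ∀ i, 0 < n i) (hNsum : ∑ i, n i = N)
    (m nb : κ → ℝ) (hm : ∀ i, 0 < m i) (hnb : ∀ i, (n i : ℝ) * m i ≤ nb i)
    (HQ : ∀ V : κ → ℝ, V ∈ FibQ W (lamQ N n) →
        DQ V m - DQ (lamQ N n) nb ≤ Real.log N - Real.log ((k:ℝ)+1)) :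
    Fintype.card κ = k + 1 ∧ (∀ i, (k+1) * n i = N) ∧ (∀ i, nb i = (n i : ℝ) * m i) ∧ W = ⊤ := by
  classical
  have hNr : (0:ℝ) < N := by exact_mod_cast hNpos
  have hk1 : (0:ℝ) < (k:ℝ) + 1 := by positivity
  set lam0 : κ → ℝ := lamQ N n with hlam0
  have hl0 : ∀ i, 0 < lam0 i := by
    intro i
    have : (0:ℝ) < (n i : ℝ) := by exact_mod_cast hn i
    exact div_pos this hNr
  have hl0sum : ∑ i, lam0 i = 1 := by
    rw [hlam0]
    simp only [lamQ]
    rw [← Finset.sum_div]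
    rw [show ∑ i, ((n i : ℝ)) = ((∑ i, n i : ℕ) : ℝ) by push_cast; rfl, hNsum]
    field_simp
  have hlamfib : lam0 ∈ FibQ W lam0 := ⟨fun i => (hl0 i).le, hl0sum, fun t _ => rfl⟩
  have hnbpos : ∀ i, 0 < nb i := by
    intro i
    have h1 : (0:ℝ) < (n i : ℝ) := by exact_mod_cast hn i
    have : (0:ℝ) < (n i : ℝ) * m i := mul_pos h1 (hm i)
    linarith [hnb i]
  have halog : ∀ i, Real.log (n i) + Real.log (m i) ≤ Real.log (nb i) := by
    intro i
    have h1 : (0:ℝ) < (n i : ℝ) := by exact_mod_cast hn i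
    rw [← Real.log_mul (ne_of_gt h1) (ne_of_gt (hm i))]
    exact Real.log_le_log (mul_pos h1 (hm i)) (hnb i)
  have hbs : ∀ V, IsBasicPt W lam0 V → (univ.filter (fun i => V i ≠ 0)).card ≤ k + 1 := by
    intro V hV
    by_contra hlarge
    push_neg at hlarge
    obtain ⟨u, hune, husupp, humom⟩ := exists_dependence k W hdimW
      (univ.filter (fun i => V i ≠ 0)) (by omega)
    apply hune
    apply hV.2 u ?_ humom
    intro i hi
    apply husupp
    simp [hi]
  have hSV_ge : ∀ V, IsBasicPt W lam0 V → -Real.log ((k:ℝ)+1) ≤ SQ V := by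
    intro V hV
    have := entropy_ge (k+1) (by omega) V hV.1.1 hV.1.2.1 (hbs V hV)
    rw [SQ]
    push_cast at this
    exact this
  -- the chain inequality, for any representation of lam0
  have chain : ∀ s w, IsRep W lam0 lam0 s w →
      (∑ i, lam0 i * (Real.log (nb i) - Real.log (m i) - Real.log (n i)))
        + (Real.log ((k:ℝ)+1) + ∑ V ∈ s, w V * SQ V) ≤ 0 := by
    intro s w hrep
    have hw0 : ∀ V ∈ s, 0 ≤ w V := fun V hV => (hrep.1 V hV).1
    have hwsum : ∑ V ∈ s, w V = 1 := hrep.2.1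
    have hsum1 : ∑ V ∈ s, w V * DQ V m ≤ Real.log N - Real.log ((k:ℝ)+1) + DQ lam0 nb := by
      calc ∑ V ∈ s, w V * DQ V m
          ≤ ∑ V ∈ s, w V * (Real.log N - Real.log ((k:ℝ)+1) + DQ lam0 nb) := by
            apply Finset.sum_le_sum
            intro V hV
            apply mul_le_mul_of_nonneg_left _ (hw0 V hV)
            have := HQ V (hrep.1 V hV).2.1.1
            linarith
        _ = Real.log N - Real.log ((k:ℝ)+1) + DQ lam0 nb := by
            rw [← Finset.sum_mul, hwsum, one_mul]
    have hdec : ∑ V ∈ s, w V * DQ V m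
        = (∑ V ∈ s, w V * SQ V) - ∑ i, lam0 i * Real.log (m i) := by
      have h1 : ∀ V ∈ s, w V * DQ V m
          = w V * SQ V - ∑ i, w V * (V i * Real.log (m i)) := by
        intro V hV
        rw [D_split V m (hrep.1 V hV).2.1.1.1 hm, mul_sub, Finset.mul_sum]
      rw [Finset.sum_congr rfl h1, Finset.sum_sub_distrib]
      congr 1
      rw [Finset.sum_comm]
      apply Finset.sum_congr rfl
      intro i _
      rw [show ∑ V ∈ s, w V * (V i * Real.log (m i)) = (∑ V ∈ s, w V * V i) * Real.log (m i) by
        rw [Finset.sum_mul]; apply Finset.sum_congr rfl; intros; ring]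
      rw [hrep.2.2 i]
    have hDnb : DQ lam0 nb = SQ lam0 - ∑ i, lam0 i * Real.log (nb i) :=
      D_split lam0 nb (fun i => (hl0 i).le) hnbpos
    have hSlam : SQ lam0 = (∑ i, lam0 i * Real.log (n i)) - Real.log N := by
      rw [SQ]
      have h1 : ∀ i ∈ univ, lam0 i * Real.log (lam0 i)
          = lam0 i * Real.log (n i) - lam0 i * Real.log N := by
        intro i _
        have hni : ((n i : ℝ)) ≠ 0 := by
          have : (0:ℝ) < (n i : ℝ) := by exact_mod_cast hn i
          exact ne_of_gt this
        rw [hlam0]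
        simp only [lamQ]
        rw [Real.log_div hni (ne_of_gt hNr)]
        ring
      rw [Finset.sum_congr rfl h1, Finset.sum_sub_distrib, ← Finset.sum_mul, hl0sum, one_mul]
    have hlin : ∑ i, lam0 i * (Real.log (nb i) - Real.log (m i) - Real.log (n i))
        = (∑ i, lam0 i * Real.log (nb i)) - (∑ i, lam0 i * Real.log (m i))
          - (∑ i, lam0 i * Real.log (n i)) := by
      rw [← Finset.sum_sub_distrib, ← Finset.sum_sub_distrib]
      apply Finset.sum_congr rfl
      intros; ring
    linarith
  have hbr1 : ∀ i, 0 ≤ lam0 i * (Real.log (nb i) - Real.log (m i) - Real.log (n i)) := by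
    intro i
    apply mul_nonneg (hl0 i).le
    linarith [halog i]
  have hbr2 : ∀ (lam : κ → ℝ) s w, IsRep W lam0 lam s w →
      -Real.log ((k:ℝ)+1) ≤ ∑ V ∈ s, w V * SQ V := by
    intro lam s w hrep
    calc -Real.log ((k:ℝ)+1) = ∑ V ∈ s, w V * (-Real.log ((k:ℝ)+1)) := by
          rw [← Finset.sum_mul, hrep.2.1, one_mul]
    _ ≤ ∑ V ∈ s, w V * SQ V := by
          apply Finset.sum_le_sum
          intro V hV
          exact mul_le_mul_of_nonneg_left (hSV_ge V (hrep.1 V hV).2.1) (hrep.1 V hV).1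
  obtain ⟨s0, w0, hrep0⟩ := rep_exists W h1W lam0 lam0 hlamfib
  have hch0 := chain s0 w0 hrep0
  have hbr20 := hbr2 lam0 s0 w0 hrep0
  have hsumzero : ∑ i, lam0 i * (Real.log (nb i) - Real.log (m i) - Real.log (n i)) = 0 := by
    apply le_antisymm (by linarith) (Finset.sum_nonneg (fun i _ => hbr1 i))
  have hC1 : ∀ i, nb i = (n i : ℝ) * m i := by
    intro i
    have h1 := (Finset.sum_eq_zero_iff_of_nonneg (fun i _ => hbr1 i)).1 hsumzero i (mem_univ i)
    have h2 : Real.log (nb i) - Real.log (m i) - Real.log (n i) = 0 := by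
      rcases mul_eq_zero.1 h1 with h | h
      · exact absurd h (ne_of_gt (hl0 i))
      · exact h
    have h3 : (0:ℝ) < (n i : ℝ) := by exact_mod_cast hn i
    have h4 : Real.log (nb i) = Real.log ((n i : ℝ) * m i) := by
      rw [Real.log_mul (ne_of_gt h3) (ne_of_gt (hm i))]
      linarith
    rw [← Real.exp_log (hnbpos i), ← Real.exp_log (mul_pos h3 (hm i)), h4]
  -- every basic point is uniform on a (k+1)-subset
  have hC2 : ∀ V, IsBasicPt W lam0 V →
      (∀ i, V i = 0 ∨ V i = 1/((k:ℝ)+1)) ∧ (univ.filter (fun i => V i ≠ 0)).card = k+1 := by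
    intro V hV
    obtain ⟨i0m, _, hminp⟩ := Finset.exists_min_image univ lam0 Finset.univ_nonempty
    set tt : ℝ := lam0 i0m with htt
    have httpos : 0 < tt := hl0 i0m
    have h1tt : (0:ℝ) < 1 + tt := by linarith
    set θ : ℝ := tt / (1 + tt) with hθ
    have hθpos : 0 < θ := div_pos httpos h1tt
    have hθlt : θ < 1 := by rw [hθ, div_lt_one h1tt]; linarith
    set y : κ → ℝ := fun i => (1 + tt) * lam0 i - tt * V i with hy
    have hVle1 : ∀ i, V i ≤ 1 := by
      intro i
      have h := Finset.single_le_sum (f := V) (fun j _ => hV.1.1 j) (mem_univ i)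
      rw [hV.1.2.1] at h; exact h
    have hynn : ∀ i, 0 ≤ y i := by
      intro i
      have h1 := hminp i (mem_univ i)
      have h2 := hVle1 i
      have h3 := hV.1.1 i
      simp only [hy]
      nlinarith
    have hyfib : y ∈ FibQ W lam0 := by
      refine ⟨hynn, ?_, ?_⟩
      · rw [show ∑ i, y i = (1+tt) * ∑ i, lam0 i - tt * ∑ i, V i by
          rw [Finset.mul_sum, Finset.mul_sum, ← Finset.sum_sub_distrib]]
        rw [hl0sum, hV.1.2.1]; ring
      · intro t ht
        rw [show ∑ i, y i * t i = (1+tt) * ∑ i, lam0 i * t i - tt * ∑ i, V i * t i by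
          rw [Finset.mul_sum, Finset.mul_sum, ← Finset.sum_sub_distrib]
          apply Finset.sum_congr rfl; intros; simp only [hy]; ring]
        rw [hV.1.2.2 t ht]; ring
    obtain ⟨sy, wy, hrepy⟩ := rep_exists W h1W lam0 y hyfib
    have hrepV : IsRep W lam0 V {V} (fun _ => 1) := by
      refine ⟨?_, by simp, by simp⟩
      intro V' hV'
      simp only [Finset.mem_singleton] at hV'
      subst hV'
      exact ⟨zero_le_one, hV, fun i h => h⟩
    have hmerge := rep_merge W lam0 lam0 V y θ (1-θ) hθpos.le (by linarith)
      (by ring)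
      (by
        intro i
        simp only [hy, hθ]
        field_simp
        ring)
      (fun i h => absurd h (ne_of_gt (hl0 i)))
      (fun i h => absurd h (ne_of_gt (hl0 i)))
      hrepV hrepy
    have hch := chain _ _ hmerge
    have hbr2y := hbr2 y sy wy hrepy
    have hms := merge_sum {V} sy (fun _ => 1) wy θ (1-θ) SQ
    have hsingle : ∑ V' ∈ ({V} : Finset (κ → ℝ)), (1:ℝ) * SQ V' = SQ V := by simp
    rw [hsingle] at hms
    have h5 : Real.log ((k:ℝ)+1) + (θ * SQ V + (1-θ) * ∑ V' ∈ sy, wy V' * SQ V') ≤ 0 := by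
      rw [← hms]
      have := hch
      rw [hsumzero] at this
      unfold mergeFun at this
      linarith
    have h6 : SQ V ≤ -Real.log ((k:ℝ)+1) := by
      have h7 : (1-θ) * (-Real.log ((k:ℝ)+1)) ≤ (1-θ) * ∑ V' ∈ sy, wy V' * SQ V' :=
        mul_le_mul_of_nonneg_left hbr2y (by linarith)
      have h8 : θ * SQ V ≤ θ * (-Real.log ((k:ℝ)+1)) := by linarith
      exact le_of_mul_le_mul_left h8 hθpos
    have h9 : SQ V = -Real.log ((k:ℝ)+1) := le_antisymm h6 (hSV_ge V hV)
    have := entropy_eq (k+1) (by omega) V hV.1.1 hV.1.2.1 (hbs V hV)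
      (by rw [← SQ]; push_cast; exact h9)
    constructor
    · intro i
      rcases this.1 i with h | h
      · exact Or.inl h
      · right; rw [h]; push_cast; ring_nf
    · exact this.2
  -- cardinality
  have hcard_ge : k + 1 ≤ Fintype.card κ := by
    have h1 := Submodule.finrank_le W
    rw [hdimW, Module.finrank_fintype_fun_eq_card] at h1
    exact h1
  have hcard_le : Fintype.card κ ≤ k + 1 := by
    by_contra hbig
    push_neg at hbig
    -- pick a basic point V1 with positive weight
    have hmem0 : ∃ V ∈ s0, w0 V ≠ 0 := by
      by_contra h
      push_neg at h
      have : ∑ V ∈ s0, w0 V = 0 := Finset.sum_eq_zero h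
      rw [hrep0.2.1] at this
      norm_num at this
    obtain ⟨V1, hV1s, _⟩ := hmem0
    have hV1b := (hrep0.1 V1 hV1s).2.1
    have hC2V1 := hC2 V1 hV1b
    set S1 : Finset κ := univ.filter (fun i => V1 i ≠ 0) with hS1
    have hS1card : S1.card = k+1 := hC2V1.2
    have hex_j : ∃ j, j ∉ S1 := by
      by_contra h
      push_neg at h
      have h2 : S1 = univ := Finset.eq_univ_iff_forall.2 h
      rw [h2, Finset.card_univ] at hS1card
      omega
    obtain ⟨js, hjs⟩ := hex_j
    obtain ⟨u, hune, husupp, humom⟩ := exists_dependence k W hdimW (insert js S1)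
      (by rw [Finset.card_insert_of_notMem hjs]; omega)
    have hujs : u js ≠ 0 := by
      intro h0
      apply hune
      apply hV1b.2 u ?_ humom
      intro i hi
      by_cases hij : i = js
      · rw [hij]; exact h0
      · apply husupp
        intro hmem
        rcases Finset.mem_insert.1 hmem with h' | h'
        · exact hij h'
        · have h3 : V1 i ≠ 0 := by
            have := Finset.mem_filter.1 h'
            exact this.2
          exact h3 hi
    set u' : κ → ℝ := fun i => u i / u js with hu'
    have hu'mom : ∀ t ∈ W, ∑ i, u' i * t i = 0 := by
      intro t ht
      have h1 : ∑ i, u' i * t i = (∑ i, u i * t i) / u js := by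
        rw [Finset.sum_div]
        apply Finset.sum_congr rfl
        intros; simp only [hu']; ring
      rw [h1, humom t ht, zero_div]
    have hu'js : u' js = 1 := div_self hujs
    have hu'sum : ∑ i, u' i = 0 := by
      have := hu'mom _ h1W
      simpa using this
    have hu'off : ∀ i, i ∉ insert js S1 → u' i = 0 := by
      intro i hi
      simp only [hu', husupp i hi, zero_div]
    have hS1sum : ∑ i ∈ S1, u' i = -1 := by
      have h1 : ∑ i ∈ insert js S1, u' i = ∑ i, u' i :=
        Finset.sum_subset (Finset.subset_univ _) (fun i _ hi => hu'off i hi)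
      rw [Finset.sum_insert hjs, hu'sum, hu'js] at h1
      linarith
    have hnegne : (S1.filter (fun i => u' i < 0)).Nonempty := by
      by_contra h
      rw [Finset.not_nonempty_iff_eq_empty] at h
      have h2 : ∀ i ∈ S1, 0 ≤ u' i := by
        intro i hi
        by_contra hlt
        push_neg at hlt
        have : i ∈ S1.filter (fun i => u' i < 0) := Finset.mem_filter.2 ⟨hi, hlt⟩
        rw [h] at this
        simp at this
      have := Finset.sum_nonneg h2
      rw [hS1sum] at this
      linarith
    obtain ⟨i0, hi0mem, hi0min⟩ :=
      Finset.exists_min_image _ (fun i => (1/((k:ℝ)+1))/(-u' i)) hnegne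
    have hi0S1 : i0 ∈ S1 := (Finset.mem_filter.1 hi0mem).1
    have hi0neg : u' i0 < 0 := (Finset.mem_filter.1 hi0mem).2
    set α : ℝ := (1/((k:ℝ)+1))/(-u' i0) with hα
    have hαpos : 0 < α := div_pos (by positivity) (by linarith)
    set lam' : κ → ℝ := fun i => V1 i + α * u' i with hlam'
    have hV1val : ∀ i ∈ S1, V1 i = 1/((k:ℝ)+1) := by
      intro i hi
      rcases hC2V1.1 i with h | h
      · exact absurd h (Finset.mem_filter.1 hi).2
      · exact h
    have hV1zero : ∀ i, i ∉ S1 → V1 i = 0 := by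
      intro i hi
      by_contra h
      exact hi (Finset.mem_filter.2 ⟨Finset.mem_univ i, h⟩)
    have hlam'nn : ∀ i, 0 ≤ lam' i := by
      intro i
      simp only [hlam']
      by_cases hij : i = js
      · rw [hij, hV1zero js hjs, hu'js]
        linarith
      · by_cases hiS : i ∈ S1
        · rw [hV1val i hiS]
          by_cases hun : u' i < 0
          · have h1 := hi0min i (Finset.mem_filter.2 ⟨hiS, hun⟩)
            have h2 : α * (-u' i) ≤ 1/((k:ℝ)+1) := by
              rw [← le_div_iff₀ (by linarith : (0:ℝ) < -u' i)]
              exact h1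
            linarith
          · push_neg at hun
            have := mul_nonneg hαpos.le hun
            positivity
        · rw [hV1zero i hiS, hu'off i (by
            intro hmem
            rcases Finset.mem_insert.1 hmem with h' | h'
            · exact hij h'
            · exact hiS h')]
          simp
    have hlam'fib : lam' ∈ FibQ W lam0 := by
      refine ⟨hlam'nn, ?_, ?_⟩
      · rw [show ∑ i, lam' i = ∑ i, V1 i + α * ∑ i, u' i by
          rw [Finset.mul_sum, ← Finset.sum_add_distrib]]
        rw [hu'sum, hV1b.1.2.1]; ring
      · intro t ht
        rw [show ∑ i, lam' i * t i = ∑ i, V1 i * t i + α * ∑ i, u' i * t i by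
          rw [Finset.mul_sum, ← Finset.sum_add_distrib]
          apply Finset.sum_congr rfl; intros; simp only [hlam']; ring]
        rw [hu'mom t ht, hV1b.1.2.2 t ht]; ring
    have hlam'i0 : lam' i0 = 0 := by
      simp only [hlam', hα]
      rw [hV1val i0 hi0S1]
      have hne : u' i0 ≠ 0 := ne_of_lt hi0neg
      have h2 : (1/((k:ℝ)+1))/(-u' i0) * u' i0 = -(1/((k:ℝ)+1)) := by
        rw [div_mul_eq_mul_div]
        rw [show (1/((k:ℝ)+1)) * u' i0 / (-u' i0) = -((1/((k:ℝ)+1)) * (u' i0 / u' i0)) by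
          rw [div_neg, mul_div_assoc]]
        rw [div_self hne]
        ring
      rw [h2]
      ring
    obtain ⟨s', w', hrep'⟩ := rep_exists W h1W lam0 lam' hlam'fib
    have hsupplam' : ∀ i, lam' i ≠ 0 → (i ∈ insert js S1 ∧ i ≠ i0) := by
      intro i hi
      constructor
      · by_contra h
        apply hi
        simp only [hlam']
        rw [hV1zero i (fun h' => h (Finset.mem_insert_of_mem h')), hu'off i h]
        ring
      · intro h
        rw [h] at hi
        exact hi hlam'i0
    have hmembersupp : ∀ V ∈ s', univ.filter (fun i => V i ≠ 0) = (insert js S1).erase i0 := by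
      intro V hVs
      have hVb := (hrep'.1 V hVs).2.1
      have hcardV := (hC2 V hVb).2
      apply Finset.eq_of_subset_of_card_le
      · intro i hi
        have hVi : V i ≠ 0 := (Finset.mem_filter.1 hi).2
        have hlami : lam' i ≠ 0 := by
          intro h0
          exact hVi ((hrep'.1 V hVs).2.2 i h0)
        have h := hsupplam' i hlami
        rw [Finset.mem_erase]
        exact ⟨h.2, h.1⟩
      · rw [hcardV, Finset.card_erase_of_mem (Finset.mem_insert_of_mem hi0S1),
          Finset.card_insert_of_notMem hjs, hS1card]
        omega
    have hunif : ∀ i ∈ (insert js S1).erase i0, lam' i = 1/((k:ℝ)+1) := by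
      intro i hi
      rw [← hrep'.2.2 i]
      have h1 : ∀ V ∈ s', w' V * V i = w' V * (1/((k:ℝ)+1)) := by
        intro V hVs
        have hVsupp := hmembersupp V hVs
        have hVi : V i ≠ 0 := by
          have : i ∈ univ.filter (fun j => V j ≠ 0) := by rw [hVsupp]; exact hi
          exact (Finset.mem_filter.1 this).2
        rcases (hC2 V (hrep'.1 V hVs).2.1).1 i with h | h
        · exact absurd h hVi
        · rw [h]
      rw [Finset.sum_congr rfl h1, ← Finset.sum_mul, hrep'.2.1, one_mul]
    have hu'zero : ∀ i ∈ S1, i ≠ i0 → u' i = 0 := by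
      intro i hiS1 hne
      have hi : i ∈ (insert js S1).erase i0 :=
        Finset.mem_erase.2 ⟨hne, Finset.mem_insert_of_mem hiS1⟩
      have h1 := hunif i hi
      simp only [hlam'] at h1
      rw [hV1val i hiS1] at h1
      have h2 : α * u' i = 0 := by linarith
      rcases mul_eq_zero.1 h2 with h | h
      · exact absurd h (ne_of_gt hαpos)
      · exact h
    have hu'i0 : u' i0 = -1 := by
      have h1 : ∑ i ∈ S1, u' i = u' i0 :=
        Finset.sum_eq_single_of_mem i0 hi0S1 (fun b hb hbne => hu'zero b hb hbne)
      rw [hS1sum] at h1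
      linarith
    have hjsne : js ≠ i0 := fun h => hjs (h ▸ hi0S1)
    have hmomjs : ∀ t ∈ W, t js = t i0 := by
      intro t ht
      have h0 := hu'mom t ht
      have hu'eq : ∀ i, u' i = (if i = js then (1:ℝ) else 0) - (if i = i0 then 1 else 0) := by
        intro i
        by_cases h1 : i = js
        · subst h1
          rw [hu'js]
          simp [hjsne]
        · by_cases h2 : i = i0
          · subst h2
            rw [hu'i0]
            simp [h1]
          · simp only [h1, h2, if_false]
            by_cases h3 : i ∈ S1
            · rw [hu'zero i h3 h2]; ring
            · rw [hu'off i (by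
                intro hmem
                rcases Finset.mem_insert.1 hmem with h' | h'
                · exact h1 h'
                · exact h3 h')]; ring
      rw [Finset.sum_congr rfl (fun i _ => by rw [hu'eq i])] at h0
      simp only [sub_mul, one_mul, zero_mul, ite_mul, Finset.sum_sub_distrib] at h0
      rw [Finset.sum_ite_eq' univ js (fun i => t i), Finset.sum_ite_eq' univ i0 (fun i => t i)] at h0
      simp at h0
      linarith
    exact hjsne (hsep js i0 hmomjs)
  have hcard : Fintype.card κ = k + 1 := le_antisymm hcard_le hcard_ge
  have hWtop : W = ⊤ := Submodule.eq_top_of_finrank_eq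
    (by rw [hdimW, Module.finrank_fintype_fun_eq_card, hcard])
  have hl0basic : IsBasicPt W lam0 lam0 := by
    refine ⟨hlamfib, ?_⟩
    intro u _ humom
    funext i
    have hsingle : (Pi.single i 1 : κ → ℝ) ∈ W := by rw [hWtop]; trivial
    have h1 := humom _ hsingle
    have h2 : ∑ j, u j * (Pi.single i 1 : κ → ℝ) j = u i := by
      rw [Finset.sum_eq_single_of_mem i (mem_univ i)]
      · simp
      · intro b _ hb
        simp [Pi.single_apply, hb]
    rw [h2] at h1
    exact h1
  have hfinal := hC2 lam0 hl0basic
  have hni : ∀ i, (k+1) * n i = N := by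
    intro i
    rcases hfinal.1 i with h | h
    · exact absurd h (ne_of_gt (hl0 i))
    · have h2 : (n i : ℝ) / N = 1/((k:ℝ)+1) := by
        rw [hlam0] at h
        simpa [lamQ] using h
      have h3 : ((k:ℝ)+1) * (n i : ℝ) = (N : ℝ) := by
        field_simp at h2
        linarith
      exact_mod_cast h3
  exact ⟨hcard, hni, hC1, hWtop⟩

end Quot

section Glue
variable {X : Type*} [Fintype X]

/-- the setoid determined by T : equal evaluations of all elements of T -/
def cSetoid (T : Submodule ℝ (X → ℝ)) : Setoid X where
  r x y := ∀ t ∈ T, t x = t y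
  iseqv := ⟨fun _ _ _ => rfl, fun h t ht => (h t ht).symm,
    fun h1 h2 t ht => (h1 t ht).trans (h2 t ht)⟩

/-- evaluation at class representatives -/
noncomputable def Thmap (T : Submodule ℝ (X → ℝ)) :
    (X → ℝ) →ₗ[ℝ] (Quotient (cSetoid T) → ℝ) where
  toFun f := fun q => f q.out
  map_add' f g := rfl
  map_smul' c f := rfl

/-- quotient image of T -/
noncomputable def Wq (T : Submodule ℝ (X → ℝ)) : Submodule ℝ (Quotient (cSetoid T) → ℝ) :=
  LinearMap.range ((Thmap T).comp T.subtype)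

lemma t_out (T : Submodule ℝ (X → ℝ)) (t : X → ℝ) (ht : t ∈ T) (x : X) :
    t (Quotient.mk (cSetoid T) x).out = t x :=
  (Quotient.mk_out (s := cSetoid T) x) t ht

lemma Thmap_inj (T : Submodule ℝ (X → ℝ)) :
    Function.Injective ((Thmap T).comp T.subtype) := by
  intro a b hab
  ext x
  have h1 := congrFun hab (Quotient.mk (cSetoid T) x)
  simp only [LinearMap.comp_apply, Thmap, LinearMap.coe_mk, AddHom.coe_mk,
    Submodule.coe_subtype] at h1
  rwa [t_out T a a.2 x, t_out T b b.2 x] at h1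

lemma mem_Wq (T : Submodule ℝ (X → ℝ)) (t : X → ℝ) (ht : t ∈ T) :
    Thmap T t ∈ Wq T := ⟨⟨t, ht⟩, rfl⟩

end Glue

end Stmt12Aux


open Finset Stmt12Aux

/-- a `k`-dimensional exponential family attaining
`sup_P inf_{Q ∈ E} D(P‖Q) = log N − log (k+1)` is the partition exponential family of a
homogeneous partition into `k+1` blocks of cardinality `N/(k+1)`; in particular
`k+1` divides `N`. -/
theorem stmt12 (X : Type*) [Fintype X] [Nonempty X] (N k : ℕ)
    (hN : Fintype.card X = N) (hk : k < N)
    (ν : X → ℝ) (hν : ∀ x, 0 < ν x)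
    (T : Submodule ℝ (X → ℝ)) (h1 : (fun _ => (1 : ℝ)) ∈ T)
    (hdim : Module.finrank ℝ T = k + 1)
    (hmax : maxDiv (expFam ν T) = ((Real.log (N : ℝ) - Real.log ((k : ℝ) + 1) : ℝ) : EReal)) :
    (k + 1) ∣ N ∧
    ∃ r : X → X → Prop, Equivalence r ∧
      (Set.range fun x : X => ({y | r x y} : Set X)).ncard = k + 1 ∧
      (∀ x : X, ({y | r x y} : Set X).ncard = N / (k + 1)) ∧
      expFam ν T = partExpFam r := by
  classical
  haveI : Fintype (Quotient (cSetoid T)) :=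
    @Quotient.fintype X _ (cSetoid T) (fun a b => Classical.propDecidable _)
  haveI : Nonempty (Quotient (cSetoid T)) := ⟨Quotient.mk _ (Classical.arbitrary X)⟩
  have hNpos : 0 < N := by omega
  have hNr : (0:ℝ) < N := by exact_mod_cast hNpos
  set fib : Quotient (cSetoid T) → Finset X :=
    fun i => univ.filter (fun x => Quotient.mk (cSetoid T) x = i) with hfibdef
  have hfibne : ∀ i, i.out ∈ fib i := by
    intro i
    simp only [hfibdef, Finset.mem_filter]
    exact ⟨Finset.mem_univ _, Quotient.out_eq i⟩
  have hys : ∀ i, ∃ x ∈ fib i, ∀ x' ∈ fib i, ν x ≤ ν x' :=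
    fun i => Finset.exists_min_image (fib i) ν ⟨i.out, hfibne i⟩
  choose y hymem hymin using hys
  have hqy : ∀ i, Quotient.mk (cSetoid T) (y i) = i := by
    intro i
    have := hymem i
    simp only [hfibdef, Finset.mem_filter] at this
    exact this.2
  set n : Quotient (cSetoid T) → ℕ := fun i => (fib i).card with hndef
  set m : Quotient (cSetoid T) → ℝ := fun i => ν (y i) with hmdef
  set nb : Quotient (cSetoid T) → ℝ := fun i => ∑ x ∈ fib i, ν x with hnbdef
  have hn : ∀ i, 0 < n i := fun i => Finset.card_pos.mpr ⟨i.out, hfibne i⟩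
  have hNsum : ∑ i, n i = N := by
    have h := Finset.card_eq_sum_card_fiberwise
      (s := (univ : Finset X)) (t := (univ : Finset (Quotient (cSetoid T))))
      (f := fun x => Quotient.mk (cSetoid T) x) (fun x _ => Finset.mem_univ _)
    rw [Finset.card_univ, hN] at h
    exact h.symm
  have hm : ∀ i, 0 < m i := fun i => hν (y i)
  have hnbpos : ∀ i, 0 < nb i :=
    fun i => Finset.sum_pos (fun x _ => hν x) ⟨i.out, hfibne i⟩
  have hnb : ∀ i, (n i : ℝ) * m i ≤ nb i := by
    intro i
    have h := Finset.card_nsmul_le_sum (fib i) ν (m i) (fun x hx => hymin i x hx)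
    simpa [nsmul_eq_mul] using h
  have houtfib : ∀ t ∈ T, ∀ i, ∀ x ∈ fib i, t x = t i.out := by
    intro t ht i x hx
    have h1 : Quotient.mk (cSetoid T) x = i := by
      simpa [hfibdef] using hx
    rw [← h1, t_out T t ht x]
  have hfibsum : ∀ f : X → ℝ, ∑ i, ∑ x ∈ fib i, f x = ∑ x, f x :=
    fun f => Finset.sum_fiberwise univ (fun x => Quotient.mk (cSetoid T) x) f
  have hl0 : ∀ i, 0 < lamQ N n i := by
    intro i
    have : (0:ℝ) < (n i : ℝ) := by exact_mod_cast hn i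
    exact div_pos this hNr
  have hl0sum : ∑ i, lamQ N n i = 1 := by
    simp only [lamQ]
    rw [← Finset.sum_div]
    rw [show ∑ i, ((n i : ℝ)) = ((∑ i, n i : ℕ) : ℝ) by push_cast; rfl, hNsum]
    field_simp
  -- the quotient hypothesis
  have HQ : ∀ V, V ∈ FibQ (Wq T) (lamQ N n) →
      DQ V m - DQ (lamQ N n) nb ≤ Real.log N - Real.log ((k:ℝ)+1) := by
    intro V hV
    obtain ⟨hV0, hV1, hVmom⟩ := hV
    set P : X → ℝ :=
      fun x => if x = y (Quotient.mk (cSetoid T) x) then V (Quotient.mk (cSetoid T) x) else 0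
      with hPdef
    set P' : X → ℝ :=
      fun x => lamQ N n (Quotient.mk (cSetoid T) x) * ν x / nb (Quotient.mk (cSetoid T) x)
      with hP'def
    have hPsum_fib : ∀ (i) (g : X → ℝ), ∑ x ∈ fib i, P x * g x = V i * g (y i) := by
      intro i g
      rw [Finset.sum_eq_single_of_mem (y i)
        (by simp only [hfibdef, Finset.mem_filter]; exact ⟨Finset.mem_univ _, hqy i⟩)]
      · have h1 : P (y i) = V i := by
          simp only [hPdef]
          rw [hqy i, if_pos rfl]
        rw [h1]
      · intro b hb hbne
        have h1 : Quotient.mk (cSetoid T) b = i := by simpa [hfibdef] using hb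
        have h2 : P b = 0 := by
          simp only [hPdef]
          rw [h1, if_neg hbne]
        rw [h2, zero_mul]
    have hP'val : ∀ i, ∀ x ∈ fib i, P' x = lamQ N n i * ν x / nb i := by
      intro i x hx
      have h1 : Quotient.mk (cSetoid T) x = i := by simpa [hfibdef] using hx
      simp only [hP'def]
      rw [h1]
    have hsum' : ∀ i, ∑ x ∈ fib i, lamQ N n i * ν x / nb i = lamQ N n i := by
      intro i
      calc ∑ x ∈ fib i, lamQ N n i * ν x / nb i
          = ∑ x ∈ fib i, (lamQ N n i / nb i) * ν x :=
            Finset.sum_congr rfl (fun x _ => by ring)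
        _ = (lamQ N n i / nb i) * ∑ x ∈ fib i, ν x := (Finset.mul_sum _ _ _).symm
        _ = (lamQ N n i / nb i) * nb i := by simp only [hnbdef]
        _ = lamQ N n i := by
            rw [div_mul_eq_mul_div, mul_div_assoc, div_self (ne_of_gt (hnbpos i)), mul_one]
    have hPprob : IsProb P := by
      constructor
      · intro x
        simp only [hPdef]
        split
        · exact hV0 _
        · exact le_rfl
      · rw [← hfibsum P]
        have hfr : ∀ i ∈ (univ : Finset (Quotient (cSetoid T))), ∑ x ∈ fib i, P x = V i := by
          intro i _
          have := hPsum_fib i (fun _ => 1)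
          simpa using this
        rw [Finset.sum_congr rfl hfr]
        exact hV1
    have hP'prob : IsProb P' := by
      constructor
      · intro x
        simp only [hP'def]
        apply div_nonneg (mul_nonneg (hl0 _).le (hν x).le) (hnbpos _).le
      · rw [← hfibsum P']
        have hfr : ∀ i ∈ (univ : Finset (Quotient (cSetoid T))), ∑ x ∈ fib i, P' x = lamQ N n i := by
          intro i _
          rw [Finset.sum_congr rfl (hP'val i)]
          exact hsum' i
        rw [Finset.sum_congr rfl hfr]
        exact hl0sum
    have hmom : ∀ t ∈ T, ∑ x, P x * t x = ∑ x, P' x * t x := by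
      intro t ht
      rw [← hfibsum (fun x => P x * t x), ← hfibsum (fun x => P' x * t x)]
      have h1 : ∀ i, ∑ x ∈ fib i, P x * t x = V i * t i.out := by
        intro i
        rw [hPsum_fib i t, houtfib t ht i (y i) (hymem i)]
      have h2 : ∀ i, ∑ x ∈ fib i, P' x * t x = lamQ N n i * t i.out := by
        intro i
        rw [Finset.sum_congr rfl (fun x hx => by
          rw [hP'val i x hx, houtfib t ht i x hx])]
        rw [← Finset.sum_mul, hsum' i]
      rw [Finset.sum_congr rfl (fun i _ => h1 i), Finset.sum_congr rfl (fun i _ => h2 i)]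
      have h3 := hVmom (Thmap T t) (mem_Wq T t ht)
      simpa [Thmap] using h3
    have hΦP : ∑ x, P x * Real.log (P x / ν x) = DQ V m := by
      rw [← hfibsum (fun x => P x * Real.log (P x / ν x)), DQ]
      apply Finset.sum_congr rfl
      intro i _
      rw [hPsum_fib i (fun x => Real.log (P x / ν x))]
      have h1 : P (y i) = V i := by
        simp only [hPdef]
        rw [hqy i, if_pos rfl]
      rw [h1]
    have hΦP' : ∑ x, P' x * Real.log (P' x / ν x) = DQ (lamQ N n) nb := by
      rw [← hfibsum (fun x => P' x * Real.log (P' x / ν x)), DQ]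
      apply Finset.sum_congr rfl
      intro i _
      have h1 : ∀ x ∈ fib i, P' x * Real.log (P' x / ν x)
          = (lamQ N n i * ν x / nb i) * Real.log (lamQ N n i / nb i) := by
        intro x hx
        rw [hP'val i x hx]
        congr 1
        congr 1
        rw [div_div, mul_comm (nb i) (ν x), ← div_div, mul_div_assoc,
          div_self (ne_of_gt (hν x)), mul_one]
      rw [Finset.sum_congr rfl h1, ← Finset.sum_mul, hsum' i]
    have hkey := key_pair ν hν T (Real.log N - Real.log ((k:ℝ)+1)) hmax P P' hPprob hP'prob hmom
    rw [hΦP, hΦP'] at hkey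
    exact hkey
  -- dimension and separation facts
  have hdimWq : Module.finrank ℝ (Wq T) = k + 1 := by
    rw [Wq, LinearMap.finrank_range_of_inj (Thmap_inj T), hdim]
  have h1Wq : (fun _ => (1:ℝ)) ∈ Wq T := ⟨⟨(fun _ => (1:ℝ)), h1⟩, rfl⟩
  have hsep : ∀ i j, (∀ t ∈ Wq T, t i = t j) → i = j := by
    intro i j h
    have h2 : ∀ t ∈ T, t i.out = t j.out := by
      intro t ht
      have := h (Thmap T t) (mem_Wq T t ht)
      simpa [Thmap] using this
    have h3 : Quotient.mk (cSetoid T) i.out = Quotient.mk (cSetoid T) j.out :=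
      Quotient.sound h2
    rwa [Quotient.out_eq, Quotient.out_eq] at h3
  obtain ⟨hcard, hni, hnbm, hWtop⟩ :=
    mainQ k N hNpos (Wq T) h1Wq hdimWq hsep n hn hNsum m nb hm hnb HQ
  -- ν is constant on classes
  have hνconst : ∀ x, ν x = m (Quotient.mk (cSetoid T) x) := by
    intro x
    set i := Quotient.mk (cSetoid T) x with hidef
    have hx : x ∈ fib i := by
      simp only [hfibdef, Finset.mem_filter]
      exact ⟨Finset.mem_univ _, rfl⟩
    have hsum0 : ∑ z ∈ fib i, (ν z - m i) = 0 := by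
      rw [Finset.sum_sub_distrib, Finset.sum_const, nsmul_eq_mul]
      have h2 : ∑ z ∈ fib i, ν z = nb i := by simp only [hnbdef]
      rw [h2, hnbm i]
      simp only [hndef]
      ring
    have hterm := (Finset.sum_eq_zero_iff_of_nonneg
      (fun z hz => sub_nonneg.2 (hymin i z hz))).1 hsum0 x hx
    linarith
  -- assemble the conclusion
  refine ⟨⟨n (Classical.arbitrary _), (hni _).symm⟩,
    (fun a b => ∀ t ∈ T, t a = t b), ?_, ?_, ?_, ?_⟩
  · exact ⟨fun _ _ _ => rfl, fun h t ht => (h t ht).symm,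
      fun h1' h2' t ht => (h1' t ht).trans (h2' t ht)⟩
  · -- number of classes
    have hclass : ∀ x : X, {z : X | ∀ t ∈ T, t x = t z}
        = {z : X | Quotient.mk (cSetoid T) z = Quotient.mk (cSetoid T) x} := by
      intro x
      ext z
      simp only [Set.mem_setOf_eq]
      constructor
      · intro h
        exact Quotient.sound (fun t ht => (h t ht).symm)
      · intro h t ht
        exact ((Quotient.exact h) t ht).symm
    have hrange : (Set.range fun x : X => ({z | ∀ t ∈ T, t x = t z} : Set X))
        = Set.range (fun i : Quotient (cSetoid T) =>
            ({z : X | Quotient.mk (cSetoid T) z = i} : Set X)) := by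
      ext s
      constructor
      · rintro ⟨x, rfl⟩
        exact ⟨Quotient.mk (cSetoid T) x, (hclass x).symm⟩
      · rintro ⟨i, rfl⟩
        refine ⟨i.out, ?_⟩
        show ({z | ∀ t ∈ T, t i.out = t z} : Set X) = {z : X | Quotient.mk (cSetoid T) z = i}
        rw [hclass i.out, Quotient.out_eq]
    rw [hrange]
    have hinj : Function.Injective (fun i : Quotient (cSetoid T) =>
        ({z : X | Quotient.mk (cSetoid T) z = i} : Set X)) := by
      intro i j hij
      have hij' : ({z : X | Quotient.mk (cSetoid T) z = i} : Set X)
          = {z : X | Quotient.mk (cSetoid T) z = j} := hij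
      have h1 : i.out ∈ {z : X | Quotient.mk (cSetoid T) z = i} := Quotient.out_eq i
      rw [hij'] at h1
      have h2 : Quotient.mk (cSetoid T) i.out = j := h1
      rwa [Quotient.out_eq] at h2
    rw [← Set.image_univ, Set.ncard_image_of_injective _ hinj, Set.ncard_univ,
      Nat.card_eq_fintype_card, hcard]
  · -- size of classes
    intro x
    have hclass : {z : X | ∀ t ∈ T, t x = t z}
        = ↑(fib (Quotient.mk (cSetoid T) x)) := by
      ext z
      simp only [Set.mem_setOf_eq, hfibdef, Finset.coe_filter, Finset.mem_univ, true_and,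
        Set.mem_setOf_eq]
      constructor
      · intro h
        exact Quotient.sound (fun t ht => (h t ht).symm)
      · intro h t ht
        exact ((Quotient.exact h) t ht).symm
    rw [hclass, Set.ncard_coe_finset]
    have h2 := hni (Quotient.mk (cSetoid T) x)
    rw [← h2, Nat.mul_div_cancel_left _ (by omega : 0 < k + 1)]
  · -- expFam = partExpFam
    ext P
    simp only [expFam, partExpFam, Set.mem_setOf_eq]
    constructor
    · rintro ⟨hp, hs, hT⟩
      refine ⟨hp, hs, ?_⟩
      intro a b hab
      have h1 : Real.log (P a / ν a) = Real.log (P b / ν b) := hab _ hT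
      have h2 : ν a = ν b := by
        rw [hνconst a, hνconst b]
        congr 1
        exact Quotient.sound hab
      have h3 : P a / ν a = P b / ν b := by
        rw [← Real.exp_log (div_pos (hp a) (hν a)), ← Real.exp_log (div_pos (hp b) (hν b)), h1]
      rw [h2] at h3
      have h4 := ne_of_gt (hν b)
      field_simp at h3
      exact h3
    · rintro ⟨hp, hs, hconst⟩
      refine ⟨hp, hs, ?_⟩
      set f : X → ℝ := fun x => Real.log (P x / ν x) with hfdef
      have hfc : ∀ a b : X, (∀ t ∈ T, t a = t b) → f a = f b := by
        intro a b hab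
        have hP2 : P a = P b := hconst a b hab
        have hν2 : ν a = ν b := by
          rw [hνconst a, hνconst b]
          congr 1
          exact Quotient.sound hab
        simp only [hfdef]
        rw [hP2, hν2]
      have hmem : Thmap T f ∈ Wq T := by
        rw [hWtop]
        trivial
      obtain ⟨t, ht⟩ := hmem
      have hfe : f = (t : X → ℝ) := by
        funext x
        have h1 : f x = f (Quotient.mk (cSetoid T) x).out :=
          hfc x _ (fun tt htt => (t_out T tt htt x).symm)
        have h2 := congrFun ht (Quotient.mk (cSetoid T) x)
        simp only [LinearMap.comp_apply, Thmap, LinearMap.coe_mk, AddHom.coe_mk,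
          Submodule.coe_subtype] at h2
        rw [h1, ← h2, t_out T (t : X → ℝ) t.2 x]
      rw [hfe]
      exact t.2
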